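/- Let N > 1 be an integer with N ≡ 0 (mod 7). Then c_N(7n + 5) ≡ 0 (mod 7) for all integers n ≥ 0. -/

import Mathlib

open Finset PowerSeries

variable (R : Type*) [CommRing R]

/-- Gaussian binomial coefficients as power series. -/
noncomputable def Gb : ℕ → ℕ → PowerSeries R
  | 0, 0 => 1
  | 0, _+1 => 0
  | n+1, 0 => Gb n 0
  | n+1, c+1 => Gb n (c+1) + PowerSeries.X ^ (n-c) * Gb n c

variable {R}

lemma Gb_zero (n : ℕ) : Gb R n 0 = 1 := by
  induction n with
  | zero => rfl
  | succ n ih => rw [Gb, ih]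

lemma Gb_gt : ∀ {n c : ℕ}, n < c → Gb R n c = 0 := by
  intro n
  induction n with
  | zero => intro c hc; match c, hc with
    | c+1, _ => rfl
  | succ n ih =>
    intro c hc
    match c, hc with
    | c+1, hc =>
      rw [Gb, ih (by omega), ih (by omega), mul_zero, add_zero]

lemma Gb_star : ∀ (m c : ℕ),
    (1 - PowerSeries.X ^ (c+1)) * Gb R m (c+1) = (1 - PowerSeries.X ^ (m-c)) * Gb R m c := by
  intro m
  induction m with
  | zero =>
    intro c
    match c with
    | 0 => show (1 - PowerSeries.X ^ 1) * (0 : PowerSeries R) = (1 - PowerSeries.X ^ 0) * 1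
           simp
    | c+1 => show (1 - PowerSeries.X ^ (c+1+1)) * Gb R 0 (c+1+1) = (1 - PowerSeries.X ^ (0-(c+1))) * Gb R 0 (c+1)
             rw [show Gb R 0 (c+1+1) = 0 from rfl, show Gb R 0 (c+1) = 0 from rfl]
             simp
  | succ m ih =>
    intro c
    rcases le_or_gt c m with hcm | hcm
    · -- c ≤ m
      have hX : (PowerSeries.X : PowerSeries R)^(m+1) = PowerSeries.X^(m-c) * PowerSeries.X^(c+1) := by
        rw [← pow_add]; congr 1; omega
      have key : (1 - PowerSeries.X ^ (c+1)) * Gb R (m+1) (c+1)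
          = (1 - PowerSeries.X ^ (m+1)) * Gb R m c := by
        rw [show Gb R (m+1) (c+1) = Gb R m (c+1) + PowerSeries.X ^ (m-c) * Gb R m c from rfl]
        linear_combination ih c + Gb R m c * hX
      rw [key]
      match c, hcm with
      | 0, _ =>
        rw [Gb_zero, Gb_zero, Nat.sub_zero]
      | c'+1, hcm =>
        rw [show Gb R (m+1) (c'+1) = Gb R m (c'+1) + PowerSeries.X ^ (m-c') * Gb R m c' from rfl,
          Nat.succ_sub_succ]
        have hA : (PowerSeries.X : PowerSeries R)^(m-c') * PowerSeries.X^(c'+1)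
            = PowerSeries.X^(m+1) := by
          rw [← pow_add]; congr 1; omega
        linear_combination (PowerSeries.X : PowerSeries R)^(m-c') * ih c'
          + Gb R m (c'+1) * hA
    · -- m < c
      rw [show Gb R (m+1) (c+1) = Gb R m (c+1) + PowerSeries.X ^ (m-c) * Gb R m c from rfl]
      rw [Gb_gt (by omega : m < c+1), Gb_gt hcm, mul_zero, add_zero, mul_zero]
      rcases eq_or_lt_of_le (by omega : m + 1 ≤ c) with hc1 | hc1
      · rw [show m+1-c = 0 by omega, pow_zero, sub_self, zero_mul]
      · rw [Gb_gt hc1, mul_zero]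

lemma Gb_second (m c : ℕ) :
    Gb R (m+1) (c+1) = PowerSeries.X ^ (c+1) * Gb R m (c+1) + Gb R m c := by
  rw [show Gb R (m+1) (c+1) = Gb R m (c+1) + PowerSeries.X ^ (m-c) * Gb R m c from rfl]
  linear_combination Gb_star (R := R) m c

/-- exponent function: δ n c = k(k-1)/2 where k = c - n as integer -/
def del (n c : ℕ) : ℕ := if n ≤ c then (c - n).choose 2 else (n - c + 1).choose 2

lemma choose_two_succ (k : ℕ) : (k+1).choose 2 = k.choose 2 + k := by
  rw [Nat.choose_succ_succ, Nat.choose_one_right, add_comm]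

lemma del_E (n c : ℕ) (h : c ≤ 2*n) : n + del n c = (2*n - c) + del n (c+1) := by
  unfold del
  rcases le_or_gt n c with h1 | h1
  · rw [if_pos h1, if_pos (by omega), show c + 1 - n = (c - n) + 1 by omega, choose_two_succ]
    omega
  · rw [if_neg (by omega)]
    rcases eq_or_lt_of_le (by omega : c + 1 ≤ n) with h2 | h2
    · rw [if_pos (by omega), show c + 1 - n = 0 by omega,
        show n - c + 1 = 2 by omega]
      simp [Nat.choose]
      omega
    · rw [if_neg (by omega), show n - c + 1 = (n - (c+1) + 1) + 1 by omega, choose_two_succ]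
      omega

lemma del_O (n c : ℕ) : n + 1 + del n c = c + del (n+1) c := by
  unfold del
  rcases le_or_gt (n+1) c with h1 | h1
  · rw [if_pos (by omega), if_pos h1, show c - n = (c - (n+1)) + 1 by omega, choose_two_succ]
    omega
  · rcases eq_or_lt_of_le (by omega : c ≤ n) with h2 | h2
    · subst h2
      rw [if_pos le_rfl, if_neg (by omega), Nat.sub_self, show c + 1 - c + 1 = 2 by omega]
      simp [Nat.choose]
    · rw [if_neg (by omega), if_neg (by omega),
        show n + 1 - c + 1 = (n - c + 1) + 1 by omega]
      have h3 := choose_two_succ (n - c + 1)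
      omega

lemma del_diag (n c : ℕ) : del (n+1) (c+1) = del n c := by
  unfold del
  rcases le_or_gt n c with h1 | h1
  · rw [if_pos (by omega), if_pos h1, Nat.succ_sub_succ]
  · rw [if_neg (by omega), if_neg (by omega), Nat.succ_sub_succ]

lemma del_up (n k : ℕ) : del n (n+1+k) = (k+1).choose 2 := by
  unfold del; rw [if_pos (by omega), show n+1+k-n = k+1 by omega]

lemma del_down (n k : ℕ) (h : k ≤ n) : del n (n-k) = (k+1).choose 2 := by
  unfold del
  rcases Nat.eq_zero_or_pos k with rfl | hk
  · rw [if_pos (by omega)]; simp [Nat.choose]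
  · rw [if_neg (by omega), show n - (n-k) + 1 = k+1 by omega]

variable (R : Type*) [CommRing R]

noncomputable def Phi (n : ℕ) : PowerSeries R := ∏ j ∈ range n, (1 - PowerSeries.X ^ (j+1))

variable {R}

lemma dvd_mul_sub_one {t : ℕ} {p q : PowerSeries R}
    (hp : (PowerSeries.X : PowerSeries R)^t ∣ p - 1)
    (hq : (PowerSeries.X : PowerSeries R)^t ∣ q - 1) :
    (PowerSeries.X : PowerSeries R)^t ∣ p * q - 1 := by
  have : p * q - 1 = p * (q - 1) + (p - 1) := by ring
  rw [this]
  exact dvd_add (Dvd.dvd.mul_left hq p) hp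

lemma dvd_prod_sub_one {ι : Type*} (s : Finset ι) (e : ι → ℕ) (t : ℕ)
    (h : ∀ j ∈ s, t ≤ e j) :
    (PowerSeries.X : PowerSeries R)^t ∣ (∏ j ∈ s, (1 - PowerSeries.X ^ (e j))) - 1 := by
  classical
  induction s using Finset.induction_on with
  | empty => simp
  | @insert a s ha ih =>
    rw [Finset.prod_insert ha]
    refine dvd_mul_sub_one ?_ (ih fun j hj => h j (Finset.mem_insert_of_mem hj))
    have : (1 : PowerSeries R) - PowerSeries.X ^ (e a) - 1 = -(PowerSeries.X ^ (e a)) := by ring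
    rw [this]
    exact (pow_dvd_pow _ (h a (Finset.mem_insert_self a s))).neg_right

lemma Gb_prod : ∀ (M c : ℕ), c ≤ M →
    (∏ j ∈ range c, (1 - PowerSeries.X ^ (j+1))) * Gb R M c
      = ∏ j ∈ range c, (1 - PowerSeries.X ^ (M-j)) := by
  intro M
  induction M with
  | zero =>
    intro c hc
    interval_cases c
    simp [Gb_zero]
  | succ M ih =>
    intro c hc
    match c with
    | 0 => simp [Gb_zero]
    | c'+1 =>
      rw [show Gb R (M+1) (c'+1) = Gb R M (c'+1) + PowerSeries.X ^ (M-c') * Gb R M c' from rfl]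
      rw [mul_add]
      -- target: peel the first factor (j = 0)
      rw [Finset.prod_range_succ' (fun j => 1 - (PowerSeries.X : PowerSeries R) ^ (M+1-j)) c']
      have htail : ∀ j, M + 1 - (j+1) = M - j := fun j => by omega
      simp only [htail, Nat.sub_zero]
      rcases le_or_gt (c'+1) M with hM | hM
      · rw [ih (c'+1) hM]
        rw [Finset.prod_range_succ (fun j => 1 - (PowerSeries.X : PowerSeries R) ^ (M-j)) c']
        rw [Finset.prod_range_succ (fun j => 1 - (PowerSeries.X : PowerSeries R) ^ (j+1)) c']
        have hIH := ih c' (by omega)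
        have hA : (PowerSeries.X : PowerSeries R)^(M-c') * PowerSeries.X^(c'+1)
            = PowerSeries.X^(M+1) := by rw [← pow_add]; congr 1; omega
        set P1 := ∏ j ∈ range c', (1 - (PowerSeries.X : PowerSeries R) ^ (j+1)) with hP1
        set P2 := ∏ j ∈ range c', (1 - (PowerSeries.X : PowerSeries R) ^ (M-j)) with hP2
        linear_combination ((1 - (PowerSeries.X:PowerSeries R)^(c'+1))
            * (PowerSeries.X:PowerSeries R)^(M-c')) * hIH - P2 * hA
      · have hcM : c' = M := by omega
        subst hcM
        rw [Gb_gt (by omega : c' < c'+1), mul_zero, zero_add, Nat.sub_self, pow_zero, one_mul]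
        rw [Finset.prod_range_succ (fun j => 1 - (PowerSeries.X : PowerSeries R) ^ (j+1)) c']
        have hIH := ih c' le_rfl
        linear_combination (1 - (PowerSeries.X:PowerSeries R)^(c'+1)) * hIH

lemma Phi_Gb {M c t : ℕ} (h : c ≤ M) (ht1 : t ≤ M - c + 1) (ht2 : t ≤ c + 1) :
    (PowerSeries.X : PowerSeries R)^t ∣ Phi R M * Gb R M c - 1 := by
  have hsplit : Phi R M = (∏ j ∈ range c, (1 - PowerSeries.X^(j+1)))
      * ∏ j ∈ range (M-c), (1 - PowerSeries.X^(c+j+1)) := by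
    rw [Phi]
    conv_lhs => rw [show M = c + (M-c) by omega]
    rw [Finset.prod_range_add]
  rw [hsplit, mul_right_comm, Gb_prod M c h]
  refine dvd_mul_sub_one (dvd_prod_sub_one _ _ _ ?_) (dvd_prod_sub_one _ _ _ ?_) <;>
    (intro j hj; rw [Finset.mem_range] at hj; omega)

variable (R : Type*) [CommRing R]

/-- finite Jacobi triple product LHS -/
noncomputable def Ap (m : ℕ) : Polynomial (PowerSeries R) :=
  (∏ j ∈ range (m/2), (Polynomial.C (PowerSeries.X^(j+1)) + Polynomial.X)) *
    ∏ j ∈ range (m - m/2), (1 + Polynomial.C (PowerSeries.X^j) * Polynomial.X)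

variable {R}

lemma coeff_mul_lin_zero (p : Polynomial (PowerSeries R)) (a b : PowerSeries R) :
    (p * (Polynomial.C a + Polynomial.C b * Polynomial.X)).coeff 0 = a * p.coeff 0 := by
  rw [mul_add, Polynomial.coeff_add, Polynomial.coeff_mul_C, ← mul_assoc]
  rw [Polynomial.coeff_mul_X_zero]
  rw [add_zero, mul_comm]

lemma coeff_mul_lin (p : Polynomial (PowerSeries R)) (a b : PowerSeries R) (c : ℕ) :
    (p * (Polynomial.C a + Polynomial.C b * Polynomial.X)).coeff (c+1)
      = a * p.coeff (c+1) + b * p.coeff c := by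
  rw [mul_add, Polynomial.coeff_add, Polynomial.coeff_mul_C, ← mul_assoc,
    Polynomial.coeff_mul_X, Polynomial.coeff_mul_C]
  ring

lemma Ap_even_succ (n : ℕ) :
    Ap R (2*n+1) = Ap R (2*n) * (1 + Polynomial.C (PowerSeries.X^n) * Polynomial.X) := by
  unfold Ap
  rw [show (2*n+1)/2 = n by omega, show (2*n)/2 = n by omega,
    show 2*n+1-n = n+1 by omega, show 2*n-n = n by omega,
    Finset.prod_range_succ (fun j => 1 + Polynomial.C ((PowerSeries.X : PowerSeries R)^j) * Polynomial.X) n,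
    mul_assoc]

lemma Ap_odd_succ (n : ℕ) :
    Ap R (2*n+2) = Ap R (2*n+1) * (Polynomial.C (PowerSeries.X^(n+1)) + Polynomial.X) := by
  unfold Ap
  rw [show (2*n+2)/2 = n+1 by omega, show (2*n+1)/2 = n by omega,
    show 2*n+2-(n+1) = n+1 by omega, show 2*n+1-n = n+1 by omega,
    Finset.prod_range_succ (fun j => Polynomial.C ((PowerSeries.X : PowerSeries R)^(j+1)) + Polynomial.X) n,
    mul_right_comm]

theorem JTfin : ∀ m c, (Ap R m).coeff c = Gb R m c * PowerSeries.X ^ (del (m/2) c) := by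
  intro m
  induction m with
  | zero =>
    intro c
    have : Ap R 0 = 1 := by unfold Ap; simp
    rw [this]
    match c with
    | 0 => simp [Polynomial.coeff_one, Gb_zero, del]
    | c+1 => rw [show Gb R 0 (c+1) = 0 from rfl]; simp [Polynomial.coeff_one]
  | succ m ih =>
    intro c
    rcases Nat.even_or_odd m with ⟨n, hn⟩ | ⟨n, hn⟩
    · -- m = 2n, m+1 = 2n+1
      have hm : m = 2*n := by omega
      subst hm
      rw [Ap_even_succ n, show (1 : Polynomial (PowerSeries R)) = Polynomial.C 1 by simp]
      match c with
      | 0 =>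
        rw [coeff_mul_lin_zero, ih 0, one_mul, show (2*n+1)/2 = (2*n)/2 by omega]
        rw [show Gb R (2*n+1) 0 = Gb R (2*n) 0 from rfl]
      | c+1 =>
        rw [coeff_mul_lin, ih (c+1), ih c, one_mul, show (2*n+1)/2 = n by omega,
          show (2*n)/2 = n by omega]
        rw [show Gb R (2*n+1) (c+1) = Gb R (2*n) (c+1) + PowerSeries.X ^ (2*n-c) * Gb R (2*n) c from rfl]
        by_cases hc : c ≤ 2*n
        · have he := del_E n c hc
          rw [add_mul]
          congr 1
          have hmono : (PowerSeries.X : PowerSeries R)^n * PowerSeries.X^(del n c)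
              = PowerSeries.X^(2*n-c) * PowerSeries.X^(del n (c+1)) := by
            rw [← pow_add, ← pow_add, he]
          linear_combination Gb R (2*n) c * hmono
        · rw [Gb_gt (by omega : 2*n < c), Gb_gt (by omega : 2*n < c+1)]
          simp
    · -- m = 2n+1, m+1 = 2n+2
      have hm : m = 2*n+1 := by omega
      subst hm
      rw [Ap_odd_succ n, show (Polynomial.X : Polynomial (PowerSeries R))
        = Polynomial.C 1 * Polynomial.X by simp]
      match c with
      | 0 =>
        rw [coeff_mul_lin_zero, ih 0, show (2*n+1)/2 = n by omega, show (2*n+2)/2 = n+1 by omega]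
        rw [show Gb R (2*n+2) 0 = Gb R (2*n+1) 0 from rfl, ← mul_assoc,
          mul_comm (PowerSeries.X^(n+1)) (Gb R (2*n+1) 0), mul_assoc, ← pow_add]
        congr 2
        have := del_O n 0
        omega
      | c+1 =>
        rw [coeff_mul_lin, ih (c+1), ih c, one_mul, show (2*n+1)/2 = n by omega,
          show (2*n+2)/2 = n+1 by omega]
        have hGs : Gb R (2*n+2) (c+1)
            = PowerSeries.X^(c+1) * Gb R (2*n+1) (c+1) + Gb R (2*n+1) c := by
          rw [show 2*n+2 = 2*n+1+1 by ring, Gb_second]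
        rw [hGs, del_diag, add_mul]
        congr 1
        have hmono : (PowerSeries.X : PowerSeries R)^(n+1) * PowerSeries.X^(del n (c+1))
            = PowerSeries.X^(c+1) * PowerSeries.X^(del n c) := by
          rw [← pow_add, ← pow_add]
          congr 1
          have h1 := del_O n (c+1)
          have h2 := del_diag n c
          omega
        linear_combination Gb R (2*n+1) (c+1) * hmono

theorem jacobi_pre (n : ℕ) :
    (PowerSeries.X : PowerSeries R)^(n+1) ∣
      Phi R (2*n+2) * (Phi R (n+1) * Phi R n)
        - ∑ i ∈ range (n+1), (-1)^i * ((2*i+1 : ℕ) : PowerSeries R)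
            * PowerSeries.X^((i+1).choose 2) := by
  set M := 2*n+2 with hM
  set Rn : Polynomial (PowerSeries R) :=
    (∏ j ∈ range (n+1), (Polynomial.C (PowerSeries.X^(j+1)) + Polynomial.X)) *
      ∏ j ∈ range n, (1 + Polynomial.C (PowerSeries.X^(j+1)) * Polynomial.X) with hRn
  have hfact : Ap R M = Rn * (1 + Polynomial.X) := by
    rw [hM]
    unfold Ap
    rw [show (2*n+2)/2 = n+1 by omega, show 2*n+2-(n+1) = n+1 by omega,
      Finset.prod_range_succ' (fun j => 1 + Polynomial.C ((PowerSeries.X : PowerSeries R)^j)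
        * Polynomial.X) n]
    simp only [pow_zero, map_one, one_mul]
    rw [hRn, mul_assoc]
  set f : ℕ → PowerSeries R := fun i =>
    Gb R M (i+1) * PowerSeries.X^(del (n+1) (i+1)) * ((i : PowerSeries R)+1) * (-1)^i with hf
  have hder : Polynomial.eval (-1) Rn = ∑ i ∈ range M, f i := by
    have hdeg : (Ap R M).natDegree ≤ M :=
      Polynomial.natDegree_le_iff_coeff_eq_zero.2 (fun N hN => by
        rw [JTfin, Gb_gt (by omega), zero_mul])
    have hdeg2 : (Polynomial.derivative (Ap R M)).natDegree < M := by
      have := Polynomial.natDegree_derivative_le (Ap R M); omega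
    have h1 : Polynomial.eval (-1) (Polynomial.derivative (Ap R M)) = Polynomial.eval (-1) Rn := by
      rw [hfact, Polynomial.derivative_mul]
      simp
    rw [← h1, Polynomial.eval_eq_sum_range' hdeg2]
    apply Finset.sum_congr rfl
    intro i _
    rw [Polynomial.coeff_derivative, JTfin, show M/2 = n+1 by omega]
    try simp only [hf]
    try push_cast
    try ring
  have hRneval : Polynomial.eval (-1) Rn = (-1)^(n+1) * (Phi R (n+1) * Phi R n) := by
    rw [hRn, Polynomial.eval_mul, Polynomial.eval_prod, Polynomial.eval_prod]
    simp only [Polynomial.eval_add, Polynomial.eval_one, Polynomial.eval_mul,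
      Polynomial.eval_C, Polynomial.eval_X]
    have e1 : ∀ j ∈ range (n+1), (PowerSeries.X : PowerSeries R)^(j+1) + (-1)
        = (-1) * (1 - PowerSeries.X^(j+1)) := fun j _ => by ring
    have e2 : ∀ j ∈ range n, (1 : PowerSeries R) + PowerSeries.X^(j+1) * (-1)
        = 1 - PowerSeries.X^(j+1) := fun j _ => by ring
    rw [Finset.prod_congr rfl e1, Finset.prod_congr rfl e2, Finset.prod_mul_distrib,
      Finset.prod_const, Finset.card_range, Phi, Phi]
    ring
  have key : ((-1 : PowerSeries R))^(n+1) * (Phi R (n+1) * Phi R n) = ∑ i ∈ range M, f i := by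
    rw [← hRneval, hder]
  -- split and reflect the sum
  have hsum2 : ∑ i ∈ range M, f i
      = ∑ i ∈ range (n+1), (f (n-i) + f (n+1+i)) := by
    rw [Finset.sum_add_distrib, hM, show 2*n+2 = (n+1)+(n+1) by ring, Finset.sum_range_add]
    congr 1
    refine ((Finset.sum_range_reflect f (n+1)).symm.trans ?_)
    apply Finset.sum_congr rfl
    intro i _
    have he : n+1-1-i = n-i := by omega
    rw [he]
  -- per-pair divisibility
  have hpair : ∀ i ∈ range (n+1), (PowerSeries.X : PowerSeries R)^(n+1) ∣
      ((-1:PowerSeries R))^(n+1) * Phi R M * (f (n-i) + f (n+1+i))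
        - (-1)^i * ((2*i+1 : ℕ) : PowerSeries R) * PowerSeries.X^((i+1).choose 2) := by
    intro i hi
    rw [Finset.mem_range] at hi
    have hi' : i ≤ n := by omega
    obtain ⟨u, hu⟩ := Phi_Gb (R := R) (M := M) (c := n+1-i) (t := n+1-i)
      (by omega) (by omega) (by omega)
    obtain ⟨v, hv⟩ := Phi_Gb (R := R) (M := M) (c := n+2+i) (t := n+1-i)
      (by omega) (by omega) (by omega)
    -- sign lemmas
    have hsq : ∀ m : ℕ, ((-1 : PowerSeries R))^m * (-1)^m = 1 := fun m => by
      rw [← pow_add]; exact Even.neg_one_pow ⟨m, by ring⟩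
    have sgnA : ((-1 : PowerSeries R))^(n+1) * (-1)^(n+1+i) = (-1)^i := by
      have hp : ((-1 : PowerSeries R))^(n+1+i) = (-1)^(n+1) * (-1)^i := pow_add _ _ _
      rw [hp, ← mul_assoc, hsq, one_mul]
    have sgnB : ((-1 : PowerSeries R))^(n+1) * (-1)^(n-i) = -((-1)^i) := by
      have h2 : ((-1 : PowerSeries R))^(n-i) * (-1)^i = (-1)^n := by
        rw [← pow_add, show n-i+i = n by omega]
      calc ((-1 : PowerSeries R))^(n+1) * (-1)^(n-i)
          = (-1)^(n+1) * ((-1)^(n-i) * (-1)^i) * (-1)^i * ((-1)^i * (-1)^i) := by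
            rw [hsq, mul_one, mul_assoc, mul_assoc, hsq, mul_one]
        _ = ((-1)^(n+1) * (-1)^n) * ((-1)^i * ((-1)^i * (-1)^i)) := by rw [h2]; ring
        _ = -((-1)^i) := by rw [hsq, mul_one, ← pow_add, Odd.neg_one_pow ⟨n, by ring⟩]; ring
    -- rewrite f-values
    have hfd : f (n-i) = Gb R M (n+1-i) * PowerSeries.X^((i+1).choose 2)
        * ((n:PowerSeries R) - (i:PowerSeries R) + 1) * (-1)^(n-i) := by
      simp only [hf]
      rw [show n-i+1 = n+1-i by omega, show del (n+1) (n+1-i) = (i+1).choose 2 from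
        del_down (n+1) i (by omega), Nat.cast_sub hi']
    have hfu : f (n+1+i) = Gb R M (n+2+i) * PowerSeries.X^((i+1).choose 2)
        * ((n:PowerSeries R) + (i:PowerSeries R) + 1 + 1) * (-1)^(n+1+i) := by
      simp only [hf]
      rw [show n+1+i+1 = n+2+i by omega, show del (n+1) (n+2+i) = (i+1).choose 2 from by
        have := del_up (n+1) i
        rw [show n+1+1+i = n+2+i by omega] at this
        exact this]
      push_cast
      ring
    refine Dvd.dvd.trans (pow_dvd_pow (PowerSeries.X : PowerSeries R)
      (show n+1 ≤ (i+1).choose 2 + (n+1-i) from by have := choose_two_succ i; omega))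
      ⟨(-1)^i * (((n:PowerSeries R)+i+2) * v - ((n:PowerSeries R)-i+1) * u), ?_⟩
    rw [pow_add, hfd, hfu, mul_add]
    have hcast : ((2*i+1 : ℕ) : PowerSeries R) = 2*(i:PowerSeries R)+1 := by push_cast; ring
    rw [hcast]
    -- now a ring identity given hu, hv, sgnA, sgnB
    linear_combination
      - ((PowerSeries.X:PowerSeries R)^((i+1).choose 2) * (((n:PowerSeries R)-i+1)) * (-1)^i) * hu
      + ((PowerSeries.X:PowerSeries R)^((i+1).choose 2) * (((n:PowerSeries R)+i+2)) * (-1)^i) * hv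
      + (Phi R M * Gb R M (n+1-i) * (PowerSeries.X:PowerSeries R)^((i+1).choose 2)
          * (((n:PowerSeries R)-i+1))) * sgnB
      + (Phi R M * Gb R M (n+2+i) * (PowerSeries.X:PowerSeries R)^((i+1).choose 2)
          * (((n:PowerSeries R)+i+2))) * sgnA
  -- assemble
  have hsq1 : ((-1 : PowerSeries R))^(n+1) * (-1)^(n+1) = 1 := by
    rw [← pow_add]; exact Even.neg_one_pow ⟨n+1, by ring⟩
  have main : Phi R M * (Phi R (n+1) * Phi R n)
      - ∑ i ∈ range (n+1), (-1)^i * ((2*i+1 : ℕ) : PowerSeries R) * PowerSeries.X^((i+1).choose 2)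
      = ∑ i ∈ range (n+1), (((-1:PowerSeries R))^(n+1) * Phi R M * (f (n-i) + f (n+1+i))
          - (-1)^i * ((2*i+1 : ℕ) : PowerSeries R) * PowerSeries.X^((i+1).choose 2)) := by
    rw [Finset.sum_sub_distrib, ← Finset.mul_sum, ← hsum2, ← key]
    rw [show ((-1:PowerSeries R))^(n+1) * Phi R M * ((-1)^(n+1) * (Phi R (n+1) * Phi R n))
      = ((-1:PowerSeries R)^(n+1) * (-1)^(n+1)) * (Phi R M * (Phi R (n+1) * Phi R n)) by ring,
      hsq1, one_mul]
  rw [main]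
  exact Finset.dvd_sum hpair

theorem jacobi (n : ℕ) :
    (PowerSeries.X : PowerSeries R)^(n+1) ∣
      Phi R (n+1)^3
        - ∑ i ∈ range (n+1), (-1)^i * ((2*i+1 : ℕ) : PowerSeries R)
            * PowerSeries.X^((i+1).choose 2) := by
  have h1 := jacobi_pre (R := R) n
  have h2 : (PowerSeries.X : PowerSeries R)^(n+1) ∣ Phi R (2*n+2) - Phi R (n+1) := by
    have hs : Phi R (2*n+2) = Phi R (n+1) * ∏ j ∈ range (n+1), (1 - PowerSeries.X^((n+1)+j+1)) := by
      rw [Phi, show 2*n+2 = (n+1)+(n+1) by ring, Finset.prod_range_add, Phi]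
    rw [hs]
    have := dvd_prod_sub_one (R := R) (range (n+1)) (fun j => (n+1)+j+1) (n+1)
      (fun j _ => by show n+1 ≤ (n+1)+j+1; omega)
    obtain ⟨w, hw⟩ := this
    exact ⟨Phi R (n+1) * w, by linear_combination Phi R (n+1) * hw⟩
  have h3 : (PowerSeries.X : PowerSeries R)^(n+1) ∣ Phi R n - Phi R (n+1) := by
    have hs : Phi R (n+1) = Phi R n * (1 - PowerSeries.X^(n+1)) := by
      rw [Phi, Phi, Finset.prod_range_succ]
    exact ⟨Phi R n, by linear_combination -hs⟩
  obtain ⟨a, ha⟩ := h1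
  obtain ⟨b, hb⟩ := h2
  obtain ⟨d, hd⟩ := h3
  exact ⟨a - b * (Phi R (n+1) * Phi R n) - Phi R (n+1)^2 * d,
    by linear_combination ha - (Phi R (n+1) * Phi R n) * hb - Phi R (n+1)^2 * hd⟩

-- ### mod 7 setup
instance : Fact (Nat.Prime 7) := ⟨by norm_num⟩
instance : CharP ((ZMod 7)⟦X⟧) 7 :=
  charP_of_injective_ringHom (f := PowerSeries.C (R := ZMod 7)) PowerSeries.C_injective 7

lemma pow_seven (m : ℕ) :
    ((1 : (ZMod 7)⟦X⟧) - PowerSeries.X^m)^7 = 1 - PowerSeries.X^(7*m) := by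
  have h : ((1 : (ZMod 7)⟦X⟧) + (-PowerSeries.X^m))^7 = 1^7 + (-PowerSeries.X^m)^7 :=
    add_pow_char _ _ 7
  rw [← sub_eq_add_neg] at h
  rw [h, one_pow, Odd.neg_pow ⟨3, by norm_num⟩, ← pow_mul, mul_comm m 7, sub_eq_add_neg]

lemma sq_seven : ∀ x y : ZMod 7, x^2 + y^2 = 0 → x = 0 := by decide

-- terms of J² vanish at coefficients ≡ 5 mod 7
lemma term_vanish {K : ℕ} (hK : K % 7 = 5) (i j : ℕ) :
    (PowerSeries.coeff (R := ZMod 7) K)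
      (((-1)^i * ((2*i+1 : ℕ) : (ZMod 7)⟦X⟧) * PowerSeries.X^((i+1).choose 2)) *
       ((-1)^j * ((2*j+1 : ℕ) : (ZMod 7)⟦X⟧) * PowerSeries.X^((j+1).choose 2))) = 0 := by
  have hterm : ((-1)^i * ((2*i+1 : ℕ) : (ZMod 7)⟦X⟧) * PowerSeries.X^((i+1).choose 2)) *
       ((-1)^j * ((2*j+1 : ℕ) : (ZMod 7)⟦X⟧) * PowerSeries.X^((j+1).choose 2))
      = PowerSeries.C (R := ZMod 7) ((-1)^i * ((2*i+1 : ℕ) : ZMod 7) * ((-1)^j * ((2*j+1 : ℕ) : ZMod 7)))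
        * PowerSeries.X^((i+1).choose 2 + (j+1).choose 2) := by
    rw [map_mul, map_mul, map_mul, map_pow, map_pow, map_neg, map_one, map_natCast,
      map_natCast, pow_add]
    ring
  rw [hterm, PowerSeries.coeff_C_mul, PowerSeries.coeff_X_pow]
  by_cases he : K = (i+1).choose 2 + (j+1).choose 2
  · -- the arithmetic heart: 7 ∣ 2i+1
    have hdvd : ∀ a : ℕ, 2 ∣ (a+1) * a := fun a => by
      rw [Nat.mul_comm]; exact (Nat.even_mul_succ_self a).two_dvd
    have h2i : 2 * ((i+1).choose 2) = (i+1) * i := by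
      rw [Nat.choose_two_right, Nat.succ_sub_one, Nat.mul_div_cancel' (hdvd i)]
    have h2j : 2 * ((j+1).choose 2) = (j+1) * j := by
      rw [Nat.choose_two_right, Nat.succ_sub_one, Nat.mul_div_cancel' (hdvd j)]
    have hnat : (2*i+1)^2 + (2*j+1)^2 = 8*K + 2 := by
      have hr : (2*i+1)^2 + (2*j+1)^2 = 4*((i+1)*i) + 4*((j+1)*j) + 2 := by ring
      rw [hr, ← h2i, ← h2j]
      omega
    have hcast : ((2*i+1 : ℕ) : ZMod 7)^2 + ((2*j+1 : ℕ) : ZMod 7)^2 = 0 := by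
      have := congrArg (Nat.cast : ℕ → ZMod 7) hnat
      push_cast at this ⊢
      rw [this]
      have hK5 : ((K : ℕ) : ZMod 7) = 5 := by
        have h75 : K = 7 * (K/7) + 5 := by omega
        have h70 : (7 : ZMod 7) = 0 := by decide
        rw [h75]; push_cast; rw [h70, zero_mul, zero_add]
      rw [hK5]; decide
    have hx : ((2*i+1 : ℕ) : ZMod 7) = 0 := sq_seven _ _ hcast
    rw [if_pos he, hx]
    ring
  · rw [if_neg he, mul_zero]

lemma coeff_J_sq {K : ℕ} (hK : K % 7 = 5) (m : ℕ) :
    (PowerSeries.coeff (R := ZMod 7) K)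
      ((∑ i ∈ range m, (-1)^i * ((2*i+1 : ℕ) : (ZMod 7)⟦X⟧) * PowerSeries.X^((i+1).choose 2))^2)
      = 0 := by
  rw [sq, Finset.sum_mul_sum, map_sum]
  refine Finset.sum_eq_zero fun i _ => ?_
  rw [map_sum]
  exact Finset.sum_eq_zero fun j _ => term_vanish hK i j

-- support-on-multiples-of-7 lemmas
lemma sev_prod (s : Finset ℕ) (e : ℕ → ℕ) (h7 : ∀ m ∈ s, 7 ∣ e m) :
    ∀ k, ¬ (7 ∣ k) →
      (PowerSeries.coeff (R := ZMod 7) k) (∏ m ∈ s, (1 - PowerSeries.X^(e m))) = 0 := by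
  classical
  induction s using Finset.induction_on with
  | empty =>
    intro k hk
    simp only [Finset.prod_empty]
    rw [PowerSeries.coeff_one, if_neg (by omega : ¬ k = 0)]
  | @insert a s ha ih =>
    intro k hk
    rw [Finset.prod_insert ha, sub_mul, one_mul, map_sub,
      ih (fun m hm => h7 m (Finset.mem_insert_of_mem hm)) k hk, mul_comm,
      PowerSeries.coeff_mul_X_pow']
    have h7a : 7 ∣ e a := h7 a (Finset.mem_insert_self a s)
    split
    · rw [ih (fun m hm => h7 m (Finset.mem_insert_of_mem hm)) (k - e a) (by omega)]
      ring
    · ring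

lemma sev_mul (f g : (ZMod 7)⟦X⟧)
    (hf : ∀ k, ¬ (7 ∣ k) → (PowerSeries.coeff (R := ZMod 7) k) f = 0)
    (hg : ∀ k, ¬ (7 ∣ k) → (PowerSeries.coeff (R := ZMod 7) k) g = 0) :
    ∀ k, ¬ (7 ∣ k) → (PowerSeries.coeff (R := ZMod 7) k) (f * g) = 0 := by
  intro k hk
  rw [PowerSeries.coeff_mul]
  refine Finset.sum_eq_zero fun p hp => ?_
  rw [Finset.HasAntidiagonal.mem_antidiagonal] at hp
  by_cases h1 : 7 ∣ p.1
  · rw [hg p.2 (by omega), mul_zero]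
  · rw [hf p.1 h1, zero_mul]

/-- For `N > 1` with `N ≡ 0 (mod 7)`, and `c_N(n)` defined by
`∑ c_N(n) qⁿ = ∏_{n≥1} 1/((1 - qⁿ)(1 - q^{N n}))` in `ℤ[[q]]`, we have
`c_N(7n + 5) ≡ 0 (mod 7)` for all `n ≥ 0`. -/
theorem cN_congruence_mod_seven
    (N : ℕ) (hN : 1 < N) (hN7 : N % 7 = 0) (c : ℕ → ℤ)
    (hc : ∀ n : ℕ, PowerSeries.coeff (R := ℤ) n ((PowerSeries.mk c) *
        ∏ m ∈ Finset.Icc 1 n, ((1 - PowerSeries.X ^ m) * (1 - PowerSeries.X ^ (N * m)))) =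
      if n = 0 then 1 else 0) :
    ∀ n : ℕ, (7 : ℤ) ∣ c (7 * n + 5) := by
  intro n
  induction n using Nat.strong_induction_on with
  | _ n IH =>
  set φ := Int.castRingHom (ZMod 7) with hφ
  set F : (ZMod 7)⟦X⟧ := PowerSeries.mk (fun i => ((c i : ℤ) : ZMod 7)) with hF
  have h0 : ∀ k : ℕ, (PowerSeries.coeff (R := ZMod 7) k)
      (F * ∏ m ∈ Finset.Icc 1 k, ((1 - PowerSeries.X ^ m) * (1 - PowerSeries.X ^ (N * m))))
      = if k = 0 then 1 else 0 := by
    intro k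
    have hmap : PowerSeries.map φ ((PowerSeries.mk c) *
        ∏ m ∈ Finset.Icc 1 k, ((1 - PowerSeries.X ^ m) * (1 - PowerSeries.X ^ (N * m))))
        = F * ∏ m ∈ Finset.Icc 1 k, ((1 - PowerSeries.X ^ m) * (1 - PowerSeries.X ^ (N * m))) := by
      have hA : PowerSeries.map φ (PowerSeries.mk c) = F := by
        ext i
        rw [PowerSeries.coeff_map, PowerSeries.coeff_mk, hF, PowerSeries.coeff_mk]
        rfl
      have hB : PowerSeries.map φ (∏ m ∈ Finset.Icc 1 k,
            ((1 - PowerSeries.X ^ m) * (1 - PowerSeries.X ^ (N * m))))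
          = ∏ m ∈ Finset.Icc 1 k, ((1 - PowerSeries.X ^ m) * (1 - PowerSeries.X ^ (N * m))) := by
        rw [map_prod]
        exact Finset.prod_congr rfl fun m _ => by
          rw [map_mul, map_sub, map_sub, map_one, map_pow, map_pow, PowerSeries.map_X]
      rw [map_mul, hA, hB]
    have h1 := congrArg φ (hc k)
    rw [← PowerSeries.coeff_map, hmap] at h1
    rw [h1]
    split <;> simp
  set K := 7*n+5 with hK
  set P : (ZMod 7)⟦X⟧ := ∏ m ∈ Finset.Icc 1 K, (1 - PowerSeries.X ^ m) with hP
  set Q : (ZMod 7)⟦X⟧ := ∏ m ∈ Finset.Icc 1 K, (1 - PowerSeries.X ^ (N*m)) with hQ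
  set P7 : (ZMod 7)⟦X⟧ := ∏ m ∈ Finset.Icc 1 K, (1 - PowerSeries.X ^ (7*m)) with hP7
  have hext : ∀ k, k ≤ K → (PowerSeries.coeff (R := ZMod 7) k) (F * (P * Q))
      = if k = 0 then 1 else 0 := by
    intro k hk
    have hsplit : Finset.Icc 1 K = Finset.Icc 1 k ∪ Finset.Ioc k K := by
      rw [show (1:ℕ) = 0 + 1 from rfl, Finset.Icc_add_one_left_eq_Ioc, Finset.Icc_add_one_left_eq_Ioc, Finset.Ioc_union_Ioc_eq_Ioc (by omega) hk]
    have hdisj : Disjoint (Finset.Icc 1 k) (Finset.Ioc k K) := by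
      rw [Finset.disjoint_left]
      intro a ha hb
      rw [Finset.mem_Icc] at ha
      rw [Finset.mem_Ioc] at hb
      omega
    have hT : (PowerSeries.X : (ZMod 7)⟦X⟧)^(k+1) ∣
        (∏ m ∈ Finset.Ioc k K, ((1 - PowerSeries.X ^ m) * (1 - PowerSeries.X ^ (N * m)))) - 1 := by
      rw [Finset.prod_mul_distrib]
      refine dvd_mul_sub_one (dvd_prod_sub_one _ _ _ fun m hm => ?_)
        (dvd_prod_sub_one _ _ _ fun m hm => ?_)
      · rw [Finset.mem_Ioc] at hm; omega
      · rw [Finset.mem_Ioc] at hm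
        calc k+1 ≤ m := by omega
        _ ≤ N*m := Nat.le_mul_of_pos_left m (by omega)
    obtain ⟨w, hw⟩ := hT
    have hexp : F * (P * Q) = F * (∏ m ∈ Finset.Icc 1 k,
          ((1 - PowerSeries.X ^ m) * (1 - PowerSeries.X ^ (N * m))))
        + PowerSeries.X^(k+1) * ((F * ∏ m ∈ Finset.Icc 1 k,
          ((1 - PowerSeries.X ^ m) * (1 - PowerSeries.X ^ (N * m)))) * w) := by
      rw [hP, hQ, ← Finset.prod_mul_distrib, hsplit, Finset.prod_union hdisj]
      linear_combination (F * ∏ m ∈ Finset.Icc 1 k,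
        ((1 - PowerSeries.X ^ m) * (1 - PowerSeries.X ^ (N * m)))) * hw
    rw [hexp, map_add, h0 k]
    have hz : (PowerSeries.coeff (R := ZMod 7) k) (PowerSeries.X^(k+1)
        * ((F * ∏ m ∈ Finset.Icc 1 k,
          ((1 - PowerSeries.X ^ m) * (1 - PowerSeries.X ^ (N * m)))) * w)) = 0 :=
      PowerSeries.X_pow_dvd_iff.1 (Dvd.intro _ rfl) k (by omega)
    rw [hz, add_zero]
  have hFPQ : (PowerSeries.X : (ZMod 7)⟦X⟧)^(K+1) ∣ F * (P * Q) - 1 := by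
    rw [PowerSeries.X_pow_dvd_iff]
    intro m hm
    rw [map_sub, hext m (by omega), PowerSeries.coeff_one]
    split <;> simp
  have hchar : P^7 = P7 := by
    rw [hP, hP7, ← Finset.prod_pow]
    exact Finset.prod_congr rfl fun m _ => pow_seven m
  have hsev : ∀ k, ¬ (7 ∣ k) → (PowerSeries.coeff (R := ZMod 7) k) (P7 * Q) = 0 := by
    refine sev_mul _ _ (sev_prod _ _ fun m _ => ⟨m, rfl⟩) (sev_prod _ _ fun m _ => ?_)
    exact Dvd.dvd.mul_right ⟨N/7, by omega⟩ m
  have hH0 : (PowerSeries.coeff (R := ZMod 7) 0) (P7 * Q) = 1 := by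
    have hcc : ∀ t : ℕ, 0 < t →
        (PowerSeries.constantCoeff (R := ZMod 7)) (1 - PowerSeries.X^t) = 1 := by
      intro t ht
      rw [map_sub, map_one, map_pow, PowerSeries.constantCoeff_X, zero_pow (by omega), sub_zero]
    rw [PowerSeries.coeff_zero_eq_constantCoeff, map_mul, hP7, hQ, map_prod, map_prod,
      Finset.prod_eq_one (fun m hm => hcc (7*m) (by rw [Finset.mem_Icc] at hm; omega)),
      Finset.prod_eq_one (fun m hm => hcc (N*m) (by
        rw [Finset.mem_Icc] at hm
        exact Nat.mul_pos (by omega) (by omega))), one_mul]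
  have hdvd6 : (PowerSeries.X : (ZMod 7)⟦X⟧)^(K+1) ∣ F * (P7 * Q) - P^6 := by
    obtain ⟨w, hw⟩ := hFPQ
    exact ⟨P^6 * w, by rw [← hchar]; linear_combination P^6 * hw⟩
  have hjac := jacobi (R := ZMod 7) K
  set J := ∑ i ∈ range (K+1), (-1)^i * ((2*i+1 : ℕ) : (ZMod 7)⟦X⟧)
    * PowerSeries.X^((i+1).choose 2) with hJ
  have hPPhi : Phi (ZMod 7) K = P := by
    rw [Phi, hP, show Finset.Icc 1 K = Finset.Ico 1 (K+1) by rw [Finset.Ico_add_one_right_eq_Icc],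
      Finset.prod_Ico_eq_prod_range]
    refine Finset.prod_congr (by rw [Nat.add_sub_cancel]) fun j _ => by rw [Nat.add_comm]
  have hjP : (PowerSeries.X : (ZMod 7)⟦X⟧)^(K+1) ∣ P^3 - J := by
    have h1 : Phi (ZMod 7) (K+1) = P * (1 - PowerSeries.X^(K+1)) := by
      rw [← hPPhi, Phi, Phi, Finset.prod_range_succ]
    obtain ⟨a, ha⟩ := hjac
    refine ⟨a + P^3 * (3 - 3*PowerSeries.X^(K+1) + PowerSeries.X^(K+1)*PowerSeries.X^(K+1)), ?_⟩
    linear_combination ha - (Phi (ZMod 7) (K+1)^2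
      + Phi (ZMod 7) (K+1) * (P * (1 - PowerSeries.X^(K+1)))
      + (P * (1 - PowerSeries.X^(K+1)))^2) * h1
  have hsq6 : (PowerSeries.X : (ZMod 7)⟦X⟧)^(K+1) ∣ P^6 - J^2 := by
    obtain ⟨a, ha⟩ := hjP
    exact ⟨a * (P^3 + J), by linear_combination (P^3 + J) * ha⟩
  have hcK : (PowerSeries.coeff (R := ZMod 7) K) (F * (P7 * Q)) = 0 := by
    have e1 := PowerSeries.X_pow_dvd_iff.1 hdvd6 K (by omega)
    have e2 := PowerSeries.X_pow_dvd_iff.1 hsq6 K (by omega)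
    have e3 : (PowerSeries.coeff (R := ZMod 7) K) (J^2) = 0 := coeff_J_sq (by omega) (K+1)
    rw [map_sub, sub_eq_zero] at e1 e2
    rw [e1, e2, e3]
  rw [PowerSeries.coeff_mul] at hcK
  rw [Finset.sum_eq_single ((K, 0) : ℕ × ℕ) ?side ?notmem] at hcK
  case side =>
    intro p hp hne
    rw [Finset.HasAntidiagonal.mem_antidiagonal] at hp
    by_cases h7 : 7 ∣ p.2
    · obtain ⟨t, ht⟩ := h7
      have hp2 : p.2 ≠ 0 := by
        intro h
        exact hne (Prod.ext (by omega) h)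
      have hm1 : p.1 = 7*(n - t) + 5 := by omega
      have hm2 : n - t < n := by omega
      have hcz : ((c p.1 : ℤ) : ZMod 7) = 0 := by
        rw [hm1]
        exact (ZMod.intCast_zmod_eq_zero_iff_dvd _ 7).2 (IH (n - t) hm2)
      rw [hF, PowerSeries.coeff_mk, hcz, zero_mul]
    · rw [hsev p.2 h7, mul_zero]
  case notmem =>
    intro h
    exact absurd (Finset.HasAntidiagonal.mem_antidiagonal.2 (add_zero K)) h
  rw [hF, PowerSeries.coeff_mk, hH0, mul_one] at hcK
  have hfin : ((c K : ℤ) : ZMod 7) = 0 := hcK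
  have h7 := (ZMod.intCast_zmod_eq_zero_iff_dvd (c K) 7).1 hfin
  exact_mod_cast h7
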